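/- Fix σ > 0 and γ > 0. For d ≥ 0 with d² > σ² and d² ≥ σ²/2 + γ/4, let w₁(d) = (−σ² + √(σ⁴ + 4γ(d² − σ²)))/(4(d² − σ²)) and define the optimized fidelity error E*(d) = w₁(d)·(1 − w₁(d))·σ² + w₁(d)²·d². Then E* is nonincreasing on this region: if d₁ < d₂ both satisfy d² > σ² and d² ≥ σ²/2 + γ/4, then E*(d₂) ≤ E*(d₁). That is, among users who interact with the AI, the fidelity error decreases with uniqueness. -/

import Mathlib

/-- Among users who interact with the AI (`d² > σ²` and `d² ≥ σ²/2 + γ/4`), the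
optimized fidelity error `E*(d) = w₁(d)(1 − w₁(d))σ² + w₁(d)²d²`, with optimal
weight `w₁(d) = (−σ² + √(σ⁴ + 4γ(d² − σ²)))/(4(d² − σ²))`, is nonincreasing in
the uniqueness `d`. -/
theorem fidelity_error_decreases_with_uniqueness (σ γ : ℝ) (hσ : 0 < σ) (hγ : 0 < γ)
    (w₁ : ℝ → ℝ)
    (hw₁ : ∀ d, w₁ d = (-σ ^ 2 + Real.sqrt (σ ^ 4 + 4 * γ * (d ^ 2 - σ ^ 2)))
      / (4 * (d ^ 2 - σ ^ 2)))
    (E : ℝ → ℝ)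
    (hE : ∀ d, E d = w₁ d * (1 - w₁ d) * σ ^ 2 + (w₁ d) ^ 2 * d ^ 2) :
    ∀ d₁ d₂ : ℝ, 0 ≤ d₁ → d₁ < d₂ →
      d₁ ^ 2 > σ ^ 2 → d₁ ^ 2 ≥ σ ^ 2 / 2 + γ / 4 →
      d₂ ^ 2 > σ ^ 2 → d₂ ^ 2 ≥ σ ^ 2 / 2 + γ / 4 →
      E d₂ ≤ E d₁ := by
  have key : ∀ d : ℝ, d ^ 2 > σ ^ 2 →
      E d = γ / 4 + σ ^ 2 / 2 *
        (γ / (σ ^ 2 + Real.sqrt (σ ^ 4 + 4 * γ * (d ^ 2 - σ ^ 2)))) := by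
    intro d hd
    set s := Real.sqrt (σ ^ 4 + 4 * γ * (d ^ 2 - σ ^ 2)) with hs
    have hx : 0 < d ^ 2 - σ ^ 2 := by linarith
    have hs2 : s ^ 2 = σ ^ 4 + 4 * γ * (d ^ 2 - σ ^ 2) := by
      rw [hs, Real.sq_sqrt (by positivity)]
    have hs0 : 0 ≤ s := Real.sqrt_nonneg _
    have hden : (0:ℝ) < σ ^ 2 + s := by positivity
    have hw : w₁ d = γ / (σ ^ 2 + s) := by
      rw [hw₁ d, ← hs, div_eq_div_iff (by positivity) hden.ne']
      nlinarith [hs2]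
    have hw2 : 4 * (w₁ d) ^ 2 * (d ^ 2 - σ ^ 2) + 2 * σ ^ 2 * (w₁ d) = γ := by
      rw [hw]
      field_simp
      linear_combination (-1) * hs2
    rw [hE]
    rw [hw] at hw2 ⊢
    linear_combination hw2 / 4
  intro d₁ d₂ hd₁0 hlt h1 _ h2 _
  rw [key d₁ h1, key d₂ h2]
  have hsq : d₁ ^ 2 ≤ d₂ ^ 2 := by nlinarith
  have hs1 : (0:ℝ) ≤ Real.sqrt (σ ^ 4 + 4 * γ * (d₁ ^ 2 - σ ^ 2)) := Real.sqrt_nonneg _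
  have hsq' : σ ^ 4 + 4 * γ * (d₁ ^ 2 - σ ^ 2) ≤ σ ^ 4 + 4 * γ * (d₂ ^ 2 - σ ^ 2) := by nlinarith
  gcongr
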